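/- Let (Ω, P) be a probability space, n ≥ 1, and let V : Fin n → Ω → α be i.i.d. random variables with values in a measurable space α. Let S ⊆ α be measurable with q := P(V 0 ∈ S) > 0, and let A : Fin n → Set Ω be pairwise disjoint measurable events. Assume the joint law is exchangeable: for every permutation σ of Fin n, the distribution of the tuple (i ↦ (V (σ i), indicator of A (σ i))) equals the distribution of (i ↦ (V i, indicator of A i)). Then for every buyer i, P(A i ∩ {V i ∈ S}) / P(V i ∈ S) ≤ (1 − (1 − q)^n) / (n · q). -/

import Mathlib

open MeasureTheory ProbabilityTheory
open scoped ENNReal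

/-- In a single-round, single-item auction with `n` i.i.d. buyers treated symmetrically
(exchangeable joint law of values and allocations), for any measurable set `S` of values
with `q := P(V 0 ∈ S) > 0`, each buyer `i` wins with probability at most
`(1 − (1 − q)^n) / (n q)` conditioned on `V i ∈ S`. -/
theorem symmetric_auction_conditional_win_bound
    {Ω α : Type*} [MeasurableSpace Ω] [MeasurableSpace α]
    (P : Measure Ω) [IsProbabilityMeasure P]
    (n : ℕ) (hn : 1 ≤ n)
    (V : Fin n → Ω → α) (hVmeas : ∀ i, Measurable (V i))
    (hindep : iIndepFun V P)
    (hident : ∀ i, P.map (V i) = P.map (V ⟨0, hn⟩))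
    (S : Set α) (hS : MeasurableSet S)
    (q : ℝ) (hq : q = (P (V ⟨0, hn⟩ ⁻¹' S)).toReal) (hqpos : 0 < q)
    (A : Fin n → Set Ω) (hAmeas : ∀ i, MeasurableSet (A i))
    (hdisj : Pairwise (Function.onFun Disjoint A))
    (hexch : ∀ σ : Equiv.Perm (Fin n),
      P.map (fun ω => fun i : Fin n =>
          (V (σ i) ω, Set.indicator (A (σ i)) (fun _ => (1 : ℝ)) ω))
        = P.map (fun ω => fun i : Fin n =>
          (V i ω, Set.indicator (A i) (fun _ => (1 : ℝ)) ω)))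
    (i : Fin n) :
    (P (A i ∩ V i ⁻¹' S)).toReal / (P (V i ⁻¹' S)).toReal
      ≤ (1 - (1 - q) ^ n) / (n * q) := by
  classical
  set i0 : Fin n := ⟨0, hn⟩ with hi0
  set p : ℝ≥0∞ := P (V i0 ⁻¹' S) with hp
  have hpreim : ∀ j : Fin n, P (V j ⁻¹' S) = p := by
    intro j
    rw [hp, ← Measure.map_apply (hVmeas j) hS, hident j, Measure.map_apply (hVmeas i0) hS]
  have hple : p ≤ 1 := prob_le_one
  set B : Fin n → Set Ω := fun j => A j ∩ V j ⁻¹' S with hB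
  have hBmeas : ∀ j, MeasurableSet (B j) := fun j => (hAmeas j).inter (hVmeas j hS)
  have hFmeas : Measurable (fun ω => fun k : Fin n =>
      (V k ω, Set.indicator (A k) (fun _ => (1:ℝ)) ω)) := by
    apply measurable_pi_lambda
    exact fun k => (hVmeas k).prod (measurable_const.indicator (hAmeas k))
  have hFmeasσ : ∀ σ : Equiv.Perm (Fin n), Measurable (fun ω => fun k : Fin n =>
      (V (σ k) ω, Set.indicator (A (σ k)) (fun _ => (1:ℝ)) ω)) := by
    intro σ
    apply measurable_pi_lambda
    exact fun k => (hVmeas _).prod (measurable_const.indicator (hAmeas _))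
  have hBeq : ∀ j : Fin n, P (B j) = P (B i) := by
    intro j
    have hσ := hexch (Equiv.swap i j)
    set T : Set (Fin n → α × ℝ) := Function.eval j ⁻¹' (S ×ˢ {(1:ℝ)}) with hT
    have hTmeas : MeasurableSet T := (measurable_pi_apply j) (hS.prod (measurableSet_singleton 1))
    have h1 := congrArg (fun μ : Measure (Fin n → α × ℝ) => μ T) hσ
    simp only at h1
    rw [Measure.map_apply (hFmeasσ _) hTmeas, Measure.map_apply hFmeas hTmeas] at h1
    have e1 : (fun ω => fun k : Fin n => (V ((Equiv.swap i j) k) ω,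
        Set.indicator (A ((Equiv.swap i j) k)) (fun _ => (1:ℝ)) ω)) ⁻¹' T = B i := by
      ext ω
      simp only [hT, hB, Set.mem_preimage, Function.eval, Set.mem_prod, Set.mem_singleton_iff,
        Equiv.swap_apply_right, Set.mem_inter_iff]
      by_cases hωA : ω ∈ A i <;> simp [Set.indicator_apply, hωA, and_comm]
    have e2 : (fun ω => fun k : Fin n =>
        (V k ω, Set.indicator (A k) (fun _ => (1:ℝ)) ω)) ⁻¹' T = B j := by
      ext ω
      simp only [hT, hB, Set.mem_preimage, Function.eval, Set.mem_prod, Set.mem_singleton_iff,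
        Set.mem_inter_iff]
      by_cases hωA : ω ∈ A j <;> simp [Set.indicator_apply, hωA, and_comm]
    rw [e1, e2] at h1
    exact h1.symm
  have hBdisj : Pairwise (Function.onFun Disjoint B) := fun a b hab =>
    ((hdisj hab).mono Set.inter_subset_left Set.inter_subset_left)
  have hsum : P (⋃ j, B j) = n * P (B i) := by
    rw [measure_iUnion hBdisj hBmeas, tsum_fintype]
    simp [hBeq, Finset.sum_const, Finset.card_univ, nsmul_eq_mul]
  have hcompl : P (⋂ j, V j ⁻¹' Sᶜ) = (1 - p) ^ n := by
    have h := (iIndepFun_iff_measure_inter_preimage_eq_mul.mp hindep) Finset.univ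
      (sets := fun _ => Sᶜ) (fun _ _ => hS.compl)
    have hc : ∀ j : Fin n, P (V j ⁻¹' Sᶜ) = 1 - p := by
      intro j
      rw [Set.preimage_compl, measure_compl (hVmeas j hS) (measure_ne_top P _), measure_univ,
        hpreim j]
    simp only [hc, Finset.prod_const, Finset.card_univ, Fintype.card_fin] at h
    simpa using h
  have hsub : (⋃ j, B j) ⊆ (⋂ j, V j ⁻¹' Sᶜ)ᶜ := by
    intro ω hω
    simp only [Set.mem_iUnion, hB, Set.mem_inter_iff, Set.mem_preimage] at hω
    obtain ⟨j, hj⟩ := hω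
    simp only [Set.mem_compl_iff, Set.mem_iInter, Set.mem_preimage, Set.mem_compl_iff, not_forall]
    exact ⟨j, fun h => h hj.2⟩
  have hbound : (n : ℝ≥0∞) * P (B i) ≤ 1 - (1 - p) ^ n := by
    rw [← hsum]
    calc P (⋃ j, B j) ≤ P ((⋂ j, V j ⁻¹' Sᶜ)ᶜ) := measure_mono hsub
      _ = 1 - (1 - p) ^ n := by
        rw [measure_compl (MeasurableSet.iInter fun j => hVmeas j hS.compl)
          (measure_ne_top P _), measure_univ, hcompl]
  have hpne : p ≠ ⊤ := measure_ne_top P _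
  have hpowle : (1 - p) ^ n ≤ 1 := pow_le_one' tsub_le_self n
  have hkey : (n : ℝ) * (P (B i)).toReal ≤ 1 - (1 - q) ^ n := by
    have h2 := ENNReal.toReal_mono (by simp [ENNReal.sub_ne_top]) hbound
    rw [ENNReal.toReal_mul, ENNReal.toReal_sub_of_le hpowle ENNReal.one_ne_top,
      ENNReal.toReal_pow, ENNReal.toReal_sub_of_le hple ENNReal.one_ne_top] at h2
    simpa [hq] using h2
  have hgoalnum : P (A i ∩ V i ⁻¹' S) = P (B i) := rfl
  rw [hgoalnum, hpreim i, ← hq]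
  have hn' : (0:ℝ) < n := by exact_mod_cast Nat.lt_of_lt_of_le Nat.zero_lt_one hn
  rw [div_le_div_iff₀ hqpos (by positivity)]
  nlinarith [mul_le_mul_of_nonneg_right hkey hqpos.le, ENNReal.toReal_nonneg (a := P (B i))]
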